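/- Let l > 0, M > 0 and a ∈ ℝ with a ≠ 0, and suppose the quartic polynomial Δ(r) = (r² + a²)(1 − r²/l²) − 2Mr has four distinct real roots r̄₋ < r₋ < r₊ < r̄₊. Then r̄₋ < 0 < r₋. -/
import Mathlib

lemma kds_poly (l M a r : ℝ) (hl : 0 < l)
    (h : (r ^ 2 + a ^ 2) * (1 - r ^ 2 / l ^ 2) - 2 * M * r = 0) :
    r ^ 4 + (a ^ 2 - l ^ 2) * r ^ 2 + 2 * M * l ^ 2 * r - a ^ 2 * l ^ 2 = 0 := by
  have hl2 : (l : ℝ) ^ 2 ≠ 0 := pow_ne_zero 2 hl.ne'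
  field_simp at h
  linear_combination -h

lemma kds_root_ne (l M a r : ℝ) (hl : 0 < l) (hM : 0 < M) (ha : a ≠ 0)
    (h : (r ^ 2 + a ^ 2) * (1 - r ^ 2 / l ^ 2) - 2 * M * r = 0) : r ≠ 0 := by
  intro h0
  subst h0
  have := kds_poly l M a 0 hl h
  have ha2 : a ^ 2 > 0 := by positivity
  have hl2 : l ^ 2 > 0 := by positivity
  nlinarith

lemma kds_root_lt (l M a r : ℝ) (hl : 0 < l) (hM : 0 < M) (ha : a ≠ 0)
    (h : (r ^ 2 + a ^ 2) * (1 - r ^ 2 / l ^ 2) - 2 * M * r = 0) : r < l := by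
  rcases lt_or_ge r 0 with hr | hr
  · linarith
  · have hr' : 0 < r := lt_of_le_of_ne hr (Ne.symm (kds_root_ne l M a r hl hM ha h))
    have hp : r ^ 2 + a ^ 2 > 0 := by positivity
    have h2 : (r ^ 2 + a ^ 2) * (1 - r ^ 2 / l ^ 2) = 2 * M * r := by linarith
    have h3 : 1 - r ^ 2 / l ^ 2 > 0 := by
      by_contra hc
      push_neg at hc
      have := mul_nonpos_of_nonneg_of_nonpos hp.le hc
      nlinarith
    have hl2 : (0:ℝ) < l ^ 2 := by positivity
    have key : (1 - r ^ 2 / l ^ 2) * l ^ 2 = l ^ 2 - r ^ 2 := by field_simp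
    have h5 : 0 < l ^ 2 - r ^ 2 := by rw [← key]; exact mul_pos h3 hl2
    nlinarith

lemma kds_root_neg_lt (l M a r : ℝ) (hl : 0 < l) (hM : 0 < M) (ha : a ≠ 0)
    (h : (r ^ 2 + a ^ 2) * (1 - r ^ 2 / l ^ 2) - 2 * M * r = 0) (hrn : r < 0) :
    r < -l := by
  have hp : r ^ 2 + a ^ 2 > 0 := by positivity
  have h2 : (r ^ 2 + a ^ 2) * (1 - r ^ 2 / l ^ 2) = 2 * M * r := by linarith
  have h3 : 1 - r ^ 2 / l ^ 2 < 0 := by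
    by_contra hc
    push_neg at hc
    have := mul_nonneg hp.le hc
    nlinarith
  have hl2 : (0:ℝ) < l ^ 2 := by positivity
  have key : (1 - r ^ 2 / l ^ 2) * l ^ 2 = l ^ 2 - r ^ 2 := by field_simp
  have h5 : l ^ 2 - r ^ 2 < 0 := by rw [← key]; exact mul_neg_of_neg_of_pos h3 hl2
  nlinarith

/-- If `Δ(r) = (r² + a²)(1 − r²/l²) − 2Mr` (with `l > 0`, `M > 0`, `a ≠ 0`) has four
distinct real roots `r̄₋ < r₋ < r₊ < r̄₊`, then `r̄₋ < 0 < r₋`. -/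
theorem kerrDeSitter_smallest_root_neg_second_root_pos
    (l M a rbm rm rp rbp : ℝ)
    (hl : 0 < l) (hM : 0 < M) (ha : a ≠ 0)
    (h1 : rbm < rm) (h2 : rm < rp) (h3 : rp < rbp)
    (hrbm : (rbm ^ 2 + a ^ 2) * (1 - rbm ^ 2 / l ^ 2) - 2 * M * rbm = 0)
    (hrm : (rm ^ 2 + a ^ 2) * (1 - rm ^ 2 / l ^ 2) - 2 * M * rm = 0)
    (hrp : (rp ^ 2 + a ^ 2) * (1 - rp ^ 2 / l ^ 2) - 2 * M * rp = 0)
    (hrbp : (rbp ^ 2 + a ^ 2) * (1 - rbp ^ 2 / l ^ 2) - 2 * M * rbp = 0) :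
    rbm < 0 ∧ 0 < rm := by
  have e1 := kds_poly l M a rbm hl hrbm
  have e2 := kds_poly l M a rm hl hrm
  have e3 := kds_poly l M a rp hl hrp
  have e4 := kds_poly l M a rbp hl hrbp
  -- first divided differences
  have d1 : rm ^ 3 + rm ^ 2 * rbm + rm * rbm ^ 2 + rbm ^ 3
      + (a ^ 2 - l ^ 2) * (rm + rbm) + 2 * M * l ^ 2 = 0 := by
    have hne : rm - rbm ≠ 0 := sub_ne_zero.mpr h1.ne'
    have hm : (rm - rbm) * (rm ^ 3 + rm ^ 2 * rbm + rm * rbm ^ 2 + rbm ^ 3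
        + (a ^ 2 - l ^ 2) * (rm + rbm) + 2 * M * l ^ 2) = 0 := by
      linear_combination e2 - e1
    exact (mul_eq_zero.mp hm).resolve_left hne
  have d2 : rp ^ 3 + rp ^ 2 * rm + rp * rm ^ 2 + rm ^ 3
      + (a ^ 2 - l ^ 2) * (rp + rm) + 2 * M * l ^ 2 = 0 := by
    have hne : rp - rm ≠ 0 := sub_ne_zero.mpr h2.ne'
    have hm : (rp - rm) * (rp ^ 3 + rp ^ 2 * rm + rp * rm ^ 2 + rm ^ 3
        + (a ^ 2 - l ^ 2) * (rp + rm) + 2 * M * l ^ 2) = 0 := by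
      linear_combination e3 - e2
    exact (mul_eq_zero.mp hm).resolve_left hne
  have d3 : rbp ^ 3 + rbp ^ 2 * rp + rbp * rp ^ 2 + rp ^ 3
      + (a ^ 2 - l ^ 2) * (rbp + rp) + 2 * M * l ^ 2 = 0 := by
    have hne : rbp - rp ≠ 0 := sub_ne_zero.mpr h3.ne'
    have hm : (rbp - rp) * (rbp ^ 3 + rbp ^ 2 * rp + rbp * rp ^ 2 + rp ^ 3
        + (a ^ 2 - l ^ 2) * (rbp + rp) + 2 * M * l ^ 2) = 0 := by
      linear_combination e4 - e3
    exact (mul_eq_zero.mp hm).resolve_left hne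
  -- second divided differences
  have s1 : rp ^ 2 + rm ^ 2 + rbm ^ 2 + rp * rm + rm * rbm + rp * rbm
      + (a ^ 2 - l ^ 2) = 0 := by
    have hne : rp - rbm ≠ 0 := sub_ne_zero.mpr (h1.trans h2).ne'
    have hm : (rp - rbm) * (rp ^ 2 + rm ^ 2 + rbm ^ 2 + rp * rm + rm * rbm + rp * rbm
        + (a ^ 2 - l ^ 2)) = 0 := by
      linear_combination d2 - d1
    exact (mul_eq_zero.mp hm).resolve_left hne
  have s2 : rbp ^ 2 + rp ^ 2 + rm ^ 2 + rbp * rp + rp * rm + rbp * rm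
      + (a ^ 2 - l ^ 2) = 0 := by
    have hne : rbp - rm ≠ 0 := sub_ne_zero.mpr (h2.trans h3).ne'
    have hm : (rbp - rm) * (rbp ^ 2 + rp ^ 2 + rm ^ 2 + rbp * rp + rp * rm + rbp * rm
        + (a ^ 2 - l ^ 2)) = 0 := by
      linear_combination d3 - d2
    exact (mul_eq_zero.mp hm).resolve_left hne
  -- sum of roots is zero
  have hsum : rbm + rm + rp + rbp = 0 := by
    have hne : rbp - rbm ≠ 0 := sub_ne_zero.mpr (h1.trans (h2.trans h3)).ne'
    have hm : (rbp - rbm) * (rbm + rm + rp + rbp) = 0 := by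
      linear_combination s2 - s1
    exact (mul_eq_zero.mp hm).resolve_left hne
  have hltm := kds_root_lt l M a rm hl hM ha hrm
  have hltp := kds_root_lt l M a rp hl hM ha hrp
  have hltbp := kds_root_lt l M a rbp hl hM ha hrbp
  constructor
  · -- rbm < 0
    by_contra hc
    push_neg at hc
    have hbm0 : rbm ≠ 0 := kds_root_ne l M a rbm hl hM ha hrbm
    have : 0 < rbm := lt_of_le_of_ne hc (Ne.symm hbm0)
    linarith
  · -- 0 < rm
    by_contra hc
    push_neg at hc
    have hm0 : rm ≠ 0 := kds_root_ne l M a rm hl hM ha hrm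
    have hmn : rm < 0 := lt_of_le_of_ne hc hm0
    have hbmn : rbm < 0 := h1.trans hmn
    have h5 := kds_root_neg_lt l M a rm hl hM ha hrm hmn
    have h6 := kds_root_neg_lt l M a rbm hl hM ha hrbm hbmn
    linarith
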